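/- If p(x) is a nontrivial polynomial set map of binomial type and a ∈ K, then p_S(x) = ∑_{σ ⊢ S} x(x − a·ℓ(σ))^{ℓ(σ)−1} ∏_{T ∈ σ} p'_T(a) for every finite nonempty S. -/
import Mathlib


open scoped Classical
open Polynomial

noncomputable section

/-- The set of set partitions of a finite set `S`. -/
def partitions {V : Type*} [DecidableEq V] (S : Finset V) :
    Finset (Finset (Finset V)) :=
  S.powerset.powerset.filter
    (fun P => (∀ T ∈ P, T ≠ ∅) ∧ P.sup id = S ∧
      ∀ T ∈ P, ∀ U ∈ P, T ≠ U → Disjoint T U)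

/-- A polynomial set map is of binomial type if
`p_S(x+y) = ∑_{T ⊎ U = S} p_T(x) p_U(y)`. -/
def BinomialType {V K : Type*} [DecidableEq V] [Field K] [CharZero K]
    (p : Finset V → Polynomial K) : Prop :=
  ∀ S : Finset V, ∀ x y : K,
    (p S).eval (x + y) = ∑ T ∈ S.powerset, (p T).eval x * (p (S \ T)).eval y

section Aux

variable {V K : Type*} [DecidableEq V] [Field K] [CharZero K]

lemma mem_partitions {S : Finset V} {P : Finset (Finset V)} :
    P ∈ partitions S ↔ ((∀ T ∈ P, T ⊆ S) ∧ (∀ T ∈ P, T ≠ ∅) ∧ P.sup id = S ∧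
      ∀ T ∈ P, ∀ U ∈ P, T ≠ U → Disjoint T U) := by
  unfold partitions
  rw [Finset.mem_filter, Finset.mem_powerset]
  constructor
  · rintro ⟨h1, h2⟩
    exact ⟨fun T hT => Finset.mem_powerset.mp (h1 hT), h2⟩
  · rintro ⟨h1, h2⟩
    exact ⟨fun T hT => Finset.mem_powerset.mpr (h1 T hT), h2⟩

lemma partitions_empty : partitions (∅ : Finset V) = {∅} := by
  ext P
  rw [mem_partitions, Finset.mem_singleton]
  constructor
  · rintro ⟨h1, h2, -, -⟩
    rcases Finset.eq_empty_or_nonempty P with rfl | ⟨T, hT⟩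
    · rfl
    · exact absurd (Finset.subset_empty.mp (h1 T hT)) (h2 T hT)
  · rintro rfl
    simp

lemma nonempty_of_mem_partitions {S : Finset V} (hS : S ≠ ∅) {P : Finset (Finset V)}
    (hP : P ∈ partitions S) : P.Nonempty := by
  rcases Finset.eq_empty_or_nonempty P with rfl | h
  · rw [mem_partitions] at hP
    exact absurd hP.2.2.1 (by simpa using hS.symm)
  · exact h

lemma erase_mem_partitions {S : Finset V} {P : Finset (Finset V)} (hP : P ∈ partitions S)
    {T : Finset V} (hT : T ∈ P) : P.erase T ∈ partitions (S \ T) := by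
  rw [mem_partitions] at hP ⊢
  obtain ⟨hsub, hne, hsup, hdis⟩ := hP
  have hsub' : ∀ U ∈ P.erase T, U ⊆ S \ T := by
    intro U hU
    have hU' := Finset.mem_of_mem_erase hU
    exact Finset.subset_sdiff.mpr
      ⟨hsub U hU', hdis U hU' T hT (Finset.ne_of_mem_erase hU)⟩
  refine ⟨hsub', fun U hU => hne U (Finset.mem_of_mem_erase hU), ?_, ?_⟩
  · apply le_antisymm
    · exact Finset.sup_le fun U hU => hsub' U hU
    · intro x hx
      rw [Finset.mem_sdiff] at hx
      have : x ∈ P.sup id := hsup ▸ hx.1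
      rw [Finset.mem_sup] at this
      obtain ⟨U, hU, hxU⟩ := this
      have hUT : U ≠ T := fun h => hx.2 (h ▸ hxU)
      exact Finset.mem_sup.mpr ⟨U, Finset.mem_erase.mpr ⟨hUT, hU⟩, hxU⟩
  · intro U hU W hW h
    exact hdis U (Finset.mem_of_mem_erase hU) W (Finset.mem_of_mem_erase hW) h

lemma insert_mem_partitions {S T : Finset V} (hTne : T ≠ ∅) (hTS : T ⊆ S)
    {P : Finset (Finset V)} (hP : P ∈ partitions (S \ T)) :
    insert T P ∈ partitions S ∧ T ∉ P := by
  rw [mem_partitions] at hP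
  obtain ⟨hsub, hne, hsup, hdis⟩ := hP
  have key : ∀ W ∈ P, Disjoint T W := by
    intro W hW
    rw [Finset.disjoint_left]
    intro x hxT hxW
    exact (Finset.mem_sdiff.mp (hsub W hW hxW)).2 hxT
  have hTP : T ∉ P := by
    intro h
    obtain ⟨x, hx⟩ := Finset.nonempty_iff_ne_empty.mpr hTne
    exact (Finset.mem_sdiff.mp (hsub T h hx)).2 hx
  refine ⟨mem_partitions.mpr ⟨?_, ?_, ?_, ?_⟩, hTP⟩
  · intro U hU
    rcases Finset.mem_insert.mp hU with rfl | hU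
    · exact hTS
    · exact (hsub U hU).trans (Finset.sdiff_subset)
  · intro U hU
    rcases Finset.mem_insert.mp hU with rfl | hU
    · exact hTne
    · exact hne U hU
  · rw [Finset.sup_insert, hsup]
    show T ∪ (S \ T) = S
    exact Finset.union_sdiff_of_subset hTS
  · intro U hU W hW hUW
    rcases Finset.mem_insert.mp hU with rfl | hU'
    · rcases Finset.mem_insert.mp hW with rfl | hW'
      · exact absurd rfl hUW
      · exact key W hW'
    · rcases Finset.mem_insert.mp hW with rfl | hW'
      · exact (key U hU').symm
      · exact hdis U hU' W hW' hUW

/-- The Abel polynomials `A_0 = 1`, `A_{n+1} = X (X - a(n+1))^n`. -/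
def Abel (a : K) : ℕ → Polynomial K
  | 0 => 1
  | (n+1) => X * (X - C (a * (n+1 : ℕ))) ^ n

lemma abel_eval_zero (a : K) (n : ℕ) : (Abel a (n+1)).eval 0 = 0 := by
  simp [Abel]

lemma abel_deriv (a : K) (n : ℕ) :
    derivative (Abel a (n+1)) = C ((n+1 : ℕ) : K) * (Abel a n).comp (X - C a) := by
  cases n with
  | zero => simp [Abel]
  | succ m =>
    simp only [Abel]
    rw [derivative_mul, derivative_X, derivative_pow, derivative_sub, derivative_X,
      derivative_C]
    simp only [Nat.add_sub_cancel, C_mul, C_eq_natCast, mul_comp, X_comp, pow_comp,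
      sub_comp, C_comp, natCast_comp]
    push_cast
    ring

lemma abel_eq (a : K) {n : ℕ} (hn : n ≠ 0) :
    Abel a n = X * (X - C (a * (n : K))) ^ (n - 1) := by
  cases n with
  | zero => exact absurd rfl hn
  | succ m => simp [Abel]

variable (p : Finset V → Polynomial K)

lemma p_eval_zero (hp : BinomialType p) (hp1 : p ∅ = 1) :
    ∀ S : Finset V, S ≠ ∅ → (p S).eval 0 = 0 := by
  intro S
  induction S using Finset.strongInduction with
  | _ S ih =>
    intro hS
    have h := hp S 0 0
    rw [add_zero] at h
    set f : Finset V → K := fun T => (p T).eval 0 * (p (S \ T)).eval 0 with hf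
    have hmem0 : (∅ : Finset V) ∈ S.powerset := Finset.empty_mem_powerset S
    have hmemS : S ∈ S.powerset.erase ∅ :=
      Finset.mem_erase.mpr ⟨hS, Finset.mem_powerset_self S⟩
    have h0 : ∀ T ∈ (S.powerset.erase ∅).erase S, f T = 0 := by
      intro T hT
      have hTS : T ≠ S := (Finset.mem_erase.mp hT).1
      have hT' := (Finset.mem_erase.mp hT).2
      have hTne : T ≠ ∅ := (Finset.mem_erase.mp hT').1
      have hTsub : T ⊆ S := Finset.mem_powerset.mp (Finset.mem_erase.mp hT').2
      have : (p T).eval 0 = 0 :=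
        ih T (Finset.ssubset_iff_subset_ne.mpr ⟨hTsub, hTS⟩) hTne
      simp [hf, this]
    have hsum : ∑ T ∈ S.powerset, f T = f ∅ + f S := by
      rw [← Finset.add_sum_erase _ f hmem0, ← Finset.add_sum_erase _ f hmemS,
        Finset.sum_eq_zero h0, add_zero]
    rw [hsum] at h
    have hf0 : f ∅ = (p S).eval 0 := by simp [hf, hp1]
    have hfS : f S = (p S).eval 0 := by simp [hf, hp1]
    rw [hf0, hfS] at h
    linear_combination -h

lemma deriv_rec (hp : BinomialType p) (a : K) (S : Finset V) :
    derivative (p S) = ∑ T ∈ S.powerset,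
      C ((derivative (p T)).eval a) * (p (S \ T)).comp (X - C a) := by
  apply Polynomial.funext
  intro z
  have hpoly : ∀ y : K, (p S).comp (X + C y)
      = ∑ T ∈ S.powerset, p T * C ((p (S \ T)).eval y) := by
    intro y
    apply Polynomial.funext
    intro x
    rw [eval_comp]
    simp only [eval_add, eval_X, eval_C, eval_finset_sum, eval_mul]
    exact hp S x y
  have hd := congrArg derivative (hpoly (z - a))
  rw [derivative_comp, map_sum] at hd
  simp only [derivative_add, derivative_X, derivative_C, add_zero, derivative_mul,
    map_zero, mul_zero, add_zero, one_mul] at hd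
  have hd' := congrArg (Polynomial.eval a) hd
  rw [eval_comp] at hd'
  simp only [eval_add, eval_X, eval_C, eval_finset_sum, eval_mul] at hd' ⊢
  rw [show a + (z - a) = z by ring] at hd'
  rw [hd']
  apply Finset.sum_congr rfl
  intro T _
  rw [eval_comp]
  simp

lemma main_expansion (hp : BinomialType p) (hp1 : p ∅ = 1) (a : K) :
    ∀ S : Finset V,
      p S = ∑ P ∈ partitions S,
        C (∏ T ∈ P, (derivative (p T)).eval a) * Abel a P.card := by
  intro S
  induction S using Finset.strongInduction with
  | _ S ih =>
    by_cases hS : S = ∅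
    · subst hS
      rw [partitions_empty]
      simp [Abel, hp1]
    · set b : Finset V → K := fun T => (derivative (p T)).eval a with hb
      have hb0 : b ∅ = 0 := by simp [hb, hp1]
      set F : Finset V → Polynomial K :=
        fun U => ∑ P ∈ partitions U, C (∏ T ∈ P, b T) * Abel a P.card with hF
      show p S = F S
      -- derivative of F S
      have hderF : derivative (F S) = ∑ P ∈ partitions S, ∑ T ∈ P,
          C (b T) * (C (∏ U ∈ P.erase T, b U) * (Abel a (P.erase T).card).comp (X - C a)) := by
        rw [hF, map_sum]
        apply Finset.sum_congr rfl
        intro P hP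
        obtain ⟨m, hm⟩ : ∃ m, P.card = m + 1 := by
          have := Finset.card_pos.mpr (nonempty_of_mem_partitions hS hP)
          exact ⟨P.card - 1, (Nat.succ_pred_eq_of_pos this).symm⟩
        rw [derivative_mul, derivative_C, zero_mul, zero_add, hm, abel_deriv]
        have hsum : ∀ T ∈ P, C (b T) * (C (∏ U ∈ P.erase T, b U)
            * (Abel a (P.erase T).card).comp (X - C a))
            = C (∏ U ∈ P, b U) * ((Abel a m).comp (X - C a)) := by
          intro T hT
          rw [Finset.card_erase_of_mem hT, hm, Nat.add_sub_cancel,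
            ← mul_assoc, ← C_mul, Finset.mul_prod_erase _ _ hT]
        rw [Finset.sum_congr rfl hsum, Finset.sum_const, hm, nsmul_eq_mul]
        simp only [C_eq_natCast]
        push_cast
        ring
      -- derivative of p S, rewritten by induction
      have hderp : derivative (p S) = ∑ T ∈ S.powerset.filter (fun T => T ≠ ∅),
          C (b T) * (F (S \ T)).comp (X - C a) := by
        rw [deriv_rec p hp a S]
        rw [← Finset.sum_subset (Finset.filter_subset (fun T => T ≠ ∅) S.powerset)]
        · apply Finset.sum_congr rfl
          intro T hT
          have hTne : T ≠ ∅ := (Finset.mem_filter.mp hT).2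
          have hTsub : T ⊆ S := Finset.mem_powerset.mp (Finset.mem_filter.mp hT).1
          rw [ih (S \ T) (Finset.sdiff_ssubset hTsub (Finset.nonempty_iff_ne_empty.mpr hTne))]
        · intro T hT hT'
          have : T = ∅ := by
            by_contra h
            exact hT' (Finset.mem_filter.mpr ⟨hT, h⟩)
          subst this
          rw [hp1]
          simp
      -- the two derivatives agree, via the partition bijection
      have hder : derivative (p S) = derivative (F S) := by
        rw [hderp, hderF]
        have hR : ∀ T ∈ S.powerset.filter (fun T => T ≠ ∅),
            C (b T) * (F (S \ T)).comp (X - C a)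
            = ∑ P ∈ partitions (S \ T),
              C (b T) * (C (∏ U ∈ P, b U) * (Abel a P.card).comp (X - C a)) := by
          intro T _
          rw [hF, Polynomial.sum_comp, Finset.mul_sum]
          apply Finset.sum_congr rfl
          intro P _
          rw [mul_comp, C_comp]
        rw [Finset.sum_congr rfl hR]
        rw [Finset.sum_sigma', Finset.sum_sigma']
        refine Finset.sum_bij'
          (fun x _ => (⟨insert x.1 x.2, x.1⟩ :
            (P : Finset (Finset V)) × Finset V))
          (fun x _ => (⟨x.2, x.1.erase x.2⟩ :
            (T : Finset V) × Finset (Finset V)))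
          ?_ ?_ ?_ ?_ ?_
        · rintro ⟨T, P⟩ hx
          rw [Finset.mem_sigma] at hx
          obtain ⟨hT, hP⟩ := hx
          have hTne : T ≠ ∅ := (Finset.mem_filter.mp hT).2
          have hTsub : T ⊆ S := Finset.mem_powerset.mp (Finset.mem_filter.mp hT).1
          obtain ⟨h1, _⟩ := insert_mem_partitions hTne hTsub hP
          exact Finset.mem_sigma.mpr ⟨h1, Finset.mem_insert_self _ _⟩
        · rintro ⟨P, T⟩ hx
          rw [Finset.mem_sigma] at hx
          obtain ⟨hP, hT⟩ := hx
          refine Finset.mem_sigma.mpr ⟨?_, erase_mem_partitions hP hT⟩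
          rw [mem_partitions] at hP
          exact Finset.mem_filter.mpr
            ⟨Finset.mem_powerset.mpr (hP.1 T hT), hP.2.1 T hT⟩
        · rintro ⟨T, P⟩ hx
          rw [Finset.mem_sigma] at hx
          obtain ⟨hT, hP⟩ := hx
          have hTne : T ≠ ∅ := (Finset.mem_filter.mp hT).2
          have hTsub : T ⊆ S := Finset.mem_powerset.mp (Finset.mem_filter.mp hT).1
          obtain ⟨_, hTP⟩ := insert_mem_partitions hTne hTsub hP
          simp [Finset.erase_insert hTP]
        · rintro ⟨P, T⟩ hx
          rw [Finset.mem_sigma] at hx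
          simp [Finset.insert_erase hx.2]
        · rintro ⟨T, P⟩ hx
          rw [Finset.mem_sigma] at hx
          obtain ⟨hT, hP⟩ := hx
          have hTne : T ≠ ∅ := (Finset.mem_filter.mp hT).2
          have hTsub : T ⊆ S := Finset.mem_powerset.mp (Finset.mem_filter.mp hT).1
          obtain ⟨_, hTP⟩ := insert_mem_partitions hTne hTsub hP
          simp [Finset.erase_insert hTP]
      -- values at 0 agree
      have h0 : (p S).eval 0 = (F S).eval 0 := by
        rw [p_eval_zero p hp hp1 S hS, hF, eval_finset_sum]
        symm
        apply Finset.sum_eq_zero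
        intro P hP
        obtain ⟨m, hm⟩ : ∃ m, P.card = m + 1 := by
          have := Finset.card_pos.mpr (nonempty_of_mem_partitions hS hP)
          exact ⟨P.card - 1, (Nat.succ_pred_eq_of_pos this).symm⟩
        rw [eval_mul, hm, abel_eval_zero, mul_zero]
      -- conclude
      have hd : derivative (p S - F S) = 0 := by
        rw [derivative_sub, hder, sub_self]
      have := Polynomial.eq_C_of_derivative_eq_zero hd
      rw [coeff_zero_eq_eval_zero, eval_sub, h0, sub_self, map_zero] at this
      have := sub_eq_zero.mp this
      exact this

end Aux

/-- Abel-type expansion: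
`p_S(x) = ∑_{σ ⊢ S} x(x − a·ℓ(σ))^{ℓ(σ)−1} ∏_{T ∈ σ} p'_T(a)`. -/
theorem binomialType_abel_expansion {V K : Type*} [DecidableEq V] [Field K]
    [CharZero K] (p : Finset V → Polynomial K) (hp : BinomialType p)
    (hp1 : p ∅ = 1) (a : K) :
    ∀ S : Finset V, S ≠ ∅ →
      p S = ∑ P ∈ partitions S,
        Polynomial.C (∏ T ∈ P, (Polynomial.derivative (p T)).eval a) *
          (X * (X - Polynomial.C (a * P.card)) ^ (P.card - 1)) := by
  intro S hS
  rw [main_expansion p hp hp1 a S]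
  apply Finset.sum_congr rfl
  intro P hP
  have hPne : P.card ≠ 0 :=
    Finset.card_ne_zero_of_mem (nonempty_of_mem_partitions hS hP).choose_spec
  rw [abel_eq a hPne]
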